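/- Let f = a_0 + a_1 z + ... + a_m z^m be a polynomial with complex coefficients, let 0 < α < β be real numbers, and let j ∈ {0,1,...,m} be an index such that |a_j| α^j > Σ_{i≠j} |a_i| β^i. Then every complex zero θ of f satisfies |θ| < α or |θ| > β. -/

import Mathlib

theorem stmt_4 (m : ℕ) (a : ℕ → ℂ) (α β : ℝ) (hα : 0 < α) (hαβ : α < β)
    (j : ℕ) (hj : j ≤ m)
    (hineq : ‖a j‖ * α ^ j >
      ∑ i ∈ (Finset.range (m + 1)).erase j, ‖a i‖ * β ^ i)
    (θ : ℂ) (hθ : ∑ i ∈ Finset.range (m + 1), a i * θ ^ i = 0) :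
    ‖θ‖ < α ∨ β < ‖θ‖ := by
  by_contra h
  push_neg at h
  obtain ⟨h1, h2⟩ := h
  have hjmem : j ∈ Finset.range (m + 1) := Finset.mem_range.mpr (Nat.lt_succ_of_le hj)
  have hsplit : a j * θ ^ j = -∑ i ∈ (Finset.range (m + 1)).erase j, a i * θ ^ i := by
    have := Finset.add_sum_erase _ (fun i => a i * θ ^ i) hjmem
    rw [← this] at hθ
    linear_combination hθ
  have key : ‖a j‖ * ‖θ‖ ^ j ≤
      ∑ i ∈ (Finset.range (m + 1)).erase j, ‖a i‖ * ‖θ‖ ^ i := by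
    calc ‖a j‖ * ‖θ‖ ^ j
        = ‖a j * θ ^ j‖ := by rw [norm_mul, norm_pow]
      _ = ‖∑ i ∈ (Finset.range (m + 1)).erase j, a i * θ ^ i‖ := by
          rw [hsplit, norm_neg]
      _ ≤ ∑ i ∈ (Finset.range (m + 1)).erase j, ‖a i * θ ^ i‖ :=
          norm_sum_le _ _
      _ = _ := by simp [norm_mul, norm_pow]
  have h3 : ‖a j‖ * α ^ j ≤ ‖a j‖ * ‖θ‖ ^ j := by
    apply mul_le_mul_of_nonneg_left _ (norm_nonneg _)
    exact pow_le_pow_left₀ hα.le h1 j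
  have h4 : ∑ i ∈ (Finset.range (m + 1)).erase j, ‖a i‖ * ‖θ‖ ^ i ≤
      ∑ i ∈ (Finset.range (m + 1)).erase j, ‖a i‖ * β ^ i := by
    apply Finset.sum_le_sum
    intro i _
    exact mul_le_mul_of_nonneg_left (pow_le_pow_left₀ (norm_nonneg _) h2 i)
      (norm_nonneg _)
  linarith
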